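/- arXiv:2006.15642 — 3 statements merged into one kernel-verified Lean document; each statement's English description precedes it below -/
import Mathlib

section
/- Let m ≥ 2 and let T ∈ B(H) be an m-isometry. Then T satisfies the (m-1)-kernel condition if and only if T satisfies the k-kernel condition for every k ∈ ℕ. -/
open ContinuousLinearMap MeasureTheory

noncomputable section

variable {H : Type*} [NormedAddCommGroup H] [InnerProductSpace ℂ H] [CompleteSpace H]

/-- `T^{[k]} = (T*)^k T^k`. -/
def opBr (T : H →L[ℂ] H) (k : ℕ) : H →L[ℂ] H :=
  ((ContinuousLinearMap.adjoint T) ^ k).comp (T ^ k)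

/-- `T` is an `m`-isometry: `∑_{p=0}^m (-1)^p (m choose p) T^{[p]} = 0`. -/
def IsMIsometry (T : H →L[ℂ] H) (m : ℕ) : Prop :=
  ∑ p ∈ Finset.range (m + 1), ((-1 : ℂ) ^ p * (m.choose p : ℂ)) • opBr T p = 0

/-- `T` satisfies the `k`-kernel condition: `Ker T*` is invariant under `T^{[n]}`
for every `n ∈ {1, …, k}`. -/
def KernelCondition (T : H →L[ℂ] H) (k : ℕ) : Prop :=
  ∀ n, 1 ≤ n → n ≤ k →
    ∀ x ∈ LinearMap.ker (ContinuousLinearMap.adjoint T : H →ₗ[ℂ] H),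
      opBr T n x ∈ LinearMap.ker (ContinuousLinearMap.adjoint T : H →ₗ[ℂ] H)

lemma opBr_add_apply (T : H →L[ℂ] H) (p n : ℕ) (x : H) :
    opBr T (p + n) x = ((ContinuousLinearMap.adjoint T) ^ n) (opBr T p ((T ^ n) x)) := by
  have h1 : (T : H →L[ℂ] H) ^ (p + n) = T ^ p * T ^ n := pow_add T p n
  have h2 : (ContinuousLinearMap.adjoint T) ^ (p + n)
      = (ContinuousLinearMap.adjoint T) ^ n * (ContinuousLinearMap.adjoint T) ^ p := by
    rw [← pow_add, add_comm]
  simp [opBr, h1, h2, ContinuousLinearMap.mul_apply]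

lemma shifted_identity (T : H →L[ℂ] H) (m : ℕ) (hT : IsMIsometry T m) (n : ℕ) (x : H) :
    ∑ p ∈ Finset.range (m + 1), ((-1 : ℂ) ^ p * (m.choose p : ℂ)) • opBr T (p + n) x = 0 := by
  have h0 : ∑ p ∈ Finset.range (m + 1),
      ((-1 : ℂ) ^ p * (m.choose p : ℂ)) • opBr T p ((T ^ n) x) = 0 := by
    have := congrArg (fun S : H →L[ℂ] H => S ((T ^ n) x)) hT
    simpa [ContinuousLinearMap.sum_apply] using this
  calc ∑ p ∈ Finset.range (m + 1), ((-1 : ℂ) ^ p * (m.choose p : ℂ)) • opBr T (p + n) x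
      = ∑ p ∈ Finset.range (m + 1), ((-1 : ℂ) ^ p * (m.choose p : ℂ)) •
          ((ContinuousLinearMap.adjoint T) ^ n) (opBr T p ((T ^ n) x)) := by
        exact Finset.sum_congr rfl fun p _ => by rw [opBr_add_apply]
    _ = ((ContinuousLinearMap.adjoint T) ^ n)
          (∑ p ∈ Finset.range (m + 1), ((-1 : ℂ) ^ p * (m.choose p : ℂ)) •
            opBr T p ((T ^ n) x)) := by
        rw [map_sum]
        exact Finset.sum_congr rfl fun p _ => by rw [_root_.map_smul]
    _ = 0 := by rw [h0, map_zero]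

/-- Lemma 2.1. If `m ≥ 2` and `T` is an `m`-isometry, then `T` satisfies the
`(m-1)`-kernel condition iff it satisfies the `k`-kernel condition for every `k ∈ ℕ`. -/
theorem mIsometry_kernelCondition_iff_forall (T : H →L[ℂ] H) (m : ℕ) (hm : 2 ≤ m)
    (hT : IsMIsometry T m) :
    KernelCondition T (m - 1) ↔ ∀ k : ℕ, 1 ≤ k → KernelCondition T k := by
  constructor
  · intro kc
    have key : ∀ n, ∀ x ∈ LinearMap.ker (ContinuousLinearMap.adjoint T : H →ₗ[ℂ] H),
        opBr T n x ∈ LinearMap.ker (ContinuousLinearMap.adjoint T : H →ₗ[ℂ] H) := by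
      intro n
      induction n using Nat.strong_induction_on with
      | _ n ih =>
        intro x hx
        rcases Nat.lt_or_ge n 1 with h1 | h1
        · interval_cases n
          simpa [opBr] using hx
        rcases Nat.lt_or_ge n m with h2 | h2
        · exact kc n h1 (by omega) x hx
        · obtain ⟨j, rfl⟩ : ∃ j, n = m + j := ⟨n - m, by omega⟩
          have hs := shifted_identity T m hT j x
          rw [Finset.sum_range_succ] at hs
          have hmem : ∑ p ∈ Finset.range m,
              ((-1 : ℂ) ^ p * (m.choose p : ℂ)) • opBr T (p + j) x
              ∈ LinearMap.ker (ContinuousLinearMap.adjoint T : H →ₗ[ℂ] H) := by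
            refine Submodule.sum_mem _ fun p hp => Submodule.smul_mem _ _ ?_
            exact ih (p + j) (by simp at hp; omega) x hx
          have hsm : ((-1 : ℂ) ^ m * (m.choose m : ℂ)) • opBr T (m + j) x
              ∈ LinearMap.ker (ContinuousLinearMap.adjoint T : H →ₗ[ℂ] H) := by
            have : ((-1 : ℂ) ^ m * (m.choose m : ℂ)) • opBr T (m + j) x
                = -∑ p ∈ Finset.range m,
                    ((-1 : ℂ) ^ p * (m.choose p : ℂ)) • opBr T (p + j) x := by
              linear_combination (norm := module) hs
            rw [this]
            exact Submodule.neg_mem _ hmem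
          have hne : ((-1 : ℂ) ^ m * (m.choose m : ℂ)) ≠ 0 := by
            simp [Nat.choose_self]
          have := Submodule.smul_mem _ (((-1 : ℂ) ^ m * (m.choose m : ℂ))⁻¹) hsm
          rwa [inv_smul_smul₀ hne] at this
    intro k _ n h1 _ x hx
    exact key n x hx
  · intro h
    exact h (m - 1) (by omega)
end
end

section
/- Let m ≥ 2 and let T ∈ B(H) be an m-isometry satisfying the k-kernel condition for every k ∈ ℕ. Then the subspaces T^p(Ker(T*)) and T^q(Ker(T*)) are orthogonal for all p, q ∈ ℤ_+ with p ≠ q. -/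
open ContinuousLinearMap MeasureTheory

noncomputable section

variable {H : Type*} [NormedAddCommGroup H] [InnerProductSpace ℂ H] [CompleteSpace H]

/-- If `m ≥ 2` and `T` is an `m`-isometry satisfying the `k`-kernel condition
for every `k ∈ ℕ`, then the subspaces `T^p(Ker T*)` and `T^q(Ker T*)` are orthogonal for
`p ≠ q`. -/
theorem mIsometry_images_ker_pairwise_orthogonal (T : H →L[ℂ] H) (m : ℕ) (hm : 2 ≤ m)
    (hT : IsMIsometry T m) (hkc : ∀ k : ℕ, 1 ≤ k → KernelCondition T k) :
    ∀ p q : ℕ, p ≠ q →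
      ∀ x ∈ (LinearMap.ker (ContinuousLinearMap.adjoint T : H →ₗ[ℂ] H)).map ((T ^ p : H →L[ℂ] H) : H →ₗ[ℂ] H),
        ∀ y ∈ (LinearMap.ker (ContinuousLinearMap.adjoint T : H →ₗ[ℂ] H)).map ((T ^ q : H →L[ℂ] H) : H →ₗ[ℂ] H),
          (inner ℂ x y : ℂ) = 0 := by
  have key : ∀ p q : ℕ, q < p → ∀ a ∈ LinearMap.ker (ContinuousLinearMap.adjoint T : H →ₗ[ℂ] H),
      ∀ b ∈ LinearMap.ker (ContinuousLinearMap.adjoint T : H →ₗ[ℂ] H),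
      (inner ℂ ((T ^ p) a) ((T ^ q) b) : ℂ) = 0 := by
    intro p q hqp a ha b hb
    have hz : (ContinuousLinearMap.adjoint T) (opBr T q b) = 0 := by
      rcases Nat.eq_zero_or_pos q with h0 | hq
      · subst h0
        simpa [opBr] using hb
      · exact hkc q hq q hq le_rfl b hb
    have hS : ((ContinuousLinearMap.adjoint T) ^ p) ((T ^ q) b) = 0 := by
      obtain ⟨r, hr⟩ : ∃ r, p = r + 1 + q := ⟨p - q - 1, by omega⟩
      rw [hr, pow_add, pow_add, pow_one]
      have h1 : ((ContinuousLinearMap.adjoint T) ^ q) ((T ^ q) b) = opBr T q b := rfl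
      simp only [ContinuousLinearMap.mul_apply, h1, hz, map_zero]
    have hadj : ContinuousLinearMap.adjoint (T ^ p) = (ContinuousLinearMap.adjoint T) ^ p := by
      simp [← ContinuousLinearMap.star_eq_adjoint, star_pow]
    rw [show (inner ℂ ((T ^ p) a) ((T ^ q) b) : ℂ)
        = inner ℂ a ((ContinuousLinearMap.adjoint (T ^ p)) ((T ^ q) b)) from
      (ContinuousLinearMap.adjoint_inner_right (T ^ p) _ _).symm, hadj, hS, inner_zero_right]
  intro p q hpq x hx y hy
  rcases hx with ⟨a, ha, rfl⟩
  rcases hy with ⟨b, hb, rfl⟩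
  rcases lt_or_gt_of_ne hpq with h | h
  · rw [← inner_conj_symm]
    rw [show (inner ℂ (((T ^ q : H →L[ℂ] H) : H →ₗ[ℂ] H) b) (((T ^ p : H →L[ℂ] H) : H →ₗ[ℂ] H) a) : ℂ) = 0 from
      key q p h b hb a ha, map_zero]
  · exact key p q h a ha b hb
end
end

section
/- Let η ∈ ℕ ∪ {∞} and let (X, A, μ) be a discrete measure space with X = {x_1} ∪ {x_{i,j} : 1 ≤ i ≤ η, j ∈ ℕ} (all elements distinct), and let φ : X → X be given by φ(x_{i,j}) = x_{i,j-1} for j ≥ 2, φ(x_{i,1}) = x_1 for all 1 ≤ i ≤ η, and φ(x_1) = x_1. Suppose the composition operator C_φ on L²(μ) is bounded and is an m-isometry for some m ≥ 2. Then C_φ is not unitarily equivalent to any unilateral operator valued weighted shift. -/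
open ContinuousLinearMap MeasureTheory

noncomputable section

variable {H : Type*} [NormedAddCommGroup H] [InnerProductSpace ℂ H] [CompleteSpace H]

/-- `Sh` is the unilateral operator valued weighted shift on `ℓ²(K)` with weights `S n`, i.e.
`Sh e_n(f) = e_{n+1}(S_n f)`. -/
def IsWeightedShiftOf {K : Type*} [NormedAddCommGroup K] [InnerProductSpace ℂ K]
    (Sh : lp (fun _ : ℕ => K) 2 →L[ℂ] lp (fun _ : ℕ => K) 2) (S : ℕ → K →L[ℂ] K) : Prop :=
  ∀ (n : ℕ) (f : K), Sh (lp.single 2 n f) = lp.single 2 (n + 1) (S n f)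

local notation "⟪" x ", " y "⟫" => @inner ℂ _ _ x y

section shiftlemmas

variable {K : Type*} [NormedAddCommGroup K] [InnerProductSpace ℂ K] [CompleteSpace K]

omit [CompleteSpace K] in
lemma shift_pow_single (Sh : lp (fun _ : ℕ => K) 2 →L[ℂ] lp (fun _ : ℕ => K) 2)
    (S : ℕ → K →L[ℂ] K) (hshift : IsWeightedShiftOf Sh S) :
    ∀ (p n : ℕ) (k : K), ∃ w : K, (Sh ^ p) (lp.single 2 n k) = lp.single 2 (n + p) w := by
  intro p
  induction p with
  | zero => intro n k; exact ⟨k, by simp⟩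
  | succ p ih =>
    intro n k
    obtain ⟨w, hw⟩ := ih (n + 1) (S n k)
    refine ⟨w, ?_⟩
    rw [pow_succ, ContinuousLinearMap.mul_apply, hshift n k, hw]
    congr 1
    omega

omit [CompleteSpace K] in
lemma inner_single_shiftpow (Sh : lp (fun _ : ℕ => K) 2 →L[ℂ] lp (fun _ : ℕ => K) 2)
    (S : ℕ → K →L[ℂ] K) (hshift : IsWeightedShiftOf Sh S) (p : ℕ) (w : K)
    (u : lp (fun _ : ℕ => K) 2) :
    ⟪lp.single 2 p w, (Sh ^ (p + 1)) u⟫ = 0 := by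
  have hsum : HasSum (fun n : ℕ => lp.single 2 n (u n)) u :=
    lp.hasSum_single ENNReal.ofNat_ne_top u
  have h2 : HasSum (fun n : ℕ => (Sh ^ (p + 1)) (lp.single 2 n (u n))) ((Sh ^ (p + 1)) u) :=
    (Sh ^ (p + 1)).hasSum hsum
  have h3 := h2.mapL (innerSL ℂ (lp.single 2 p w))
  simp only [innerSL_apply_apply] at h3
  have h4 : ∀ n : ℕ, ⟪lp.single 2 p w, (Sh ^ (p + 1)) (lp.single 2 n (u n))⟫ = 0 := by
    intro n
    obtain ⟨v, hv⟩ := shift_pow_single Sh S hshift (p + 1) n (u n)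
    rw [hv, lp.inner_single_right, lp.single_apply_ne 2 _ _ (by omega), inner_zero_left]
  refine h3.unique ?_
  simpa only [h4] using (hasSum_zero : HasSum (fun _ : ℕ => (0 : ℂ)) 0)

omit [InnerProductSpace ℂ K] [CompleteSpace K] in
lemma lp_eq_single_zero (v : lp (fun _ : ℕ => K) 2) (h : ∀ n : ℕ, v (n + 1) = 0) :
    v = lp.single 2 0 (v 0) := by
  apply lp.ext
  funext n
  cases n with
  | zero => rw [lp.single_apply_self]
  | succ n => rw [lp.single_apply_ne 2 _ _ (by omega), h n]

end shiftlemmas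

lemma binom_sum (m : ℕ) (T : ℂ) :
    ∑ p ∈ Finset.range (m + 1), ((-1 : ℂ) ^ p * (m.choose p : ℂ)) * T ^ p = (1 - T) ^ m := by
  have h : (1 - T) ^ m = (-T + 1) ^ m := by ring
  rw [h, add_pow]
  refine Finset.sum_congr rfl fun p hp => ?_
  rw [neg_pow]
  ring

lemma setIntegral_indicator_sub {X : Type*} [MeasurableSpace X] (μ : Measure X)
    {s t r : Set X} (ht : MeasurableSet t) (hr : MeasurableSet r)
    (hts : t ⊆ s) (hrs : r ⊆ s) (hμt : μ t ≠ ⊤) (hμr : μ r ≠ ⊤) (a b : ℂ) :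
    ∫ x in s, (a * t.indicator (fun _ => (1 : ℂ)) x - b * r.indicator (fun _ => (1 : ℂ)) x) ∂μ
      = a * (μ t).toReal - b * (μ r).toReal := by
  have hint : ∀ (t' : Set X), MeasurableSet t' → μ t' ≠ ⊤ → ∀ c : ℂ,
      Integrable (fun x => c * t'.indicator (fun _ => (1 : ℂ)) x) (μ.restrict s) := by
    intro t' ht' hμt' c
    have h1 : Integrable (t'.indicator fun _ => (1 : ℂ)) (μ.restrict s) := by
      rw [integrable_indicator_iff ht']
      refine integrableOn_const ?_
      exact (lt_of_le_of_lt (Measure.restrict_apply_le s t') hμt'.lt_top).ne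
    simpa [mul_comm] using h1.const_mul c
  rw [integral_sub (hint t ht hμt a) (hint r hr hμr b)]
  have key : ∀ (t' : Set X), MeasurableSet t' → t' ⊆ s → ∀ c : ℂ,
      ∫ x in s, c * t'.indicator (fun _ => (1 : ℂ)) x ∂μ = c * (μ t').toReal := by
    intro t' ht' ht's c
    calc ∫ x in s, c * t'.indicator (fun _ => (1 : ℂ)) x ∂μ
        = ∫ x in s, t'.indicator (fun _ => c) x ∂μ := by
          congr 1; funext x
          by_cases hx : x ∈ t' <;> simp [Set.indicator_apply, hx]
      _ = ∫ _ in s ∩ t', c ∂μ := by rw [setIntegral_indicator ht']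
      _ = c * (μ t').toReal := by
          rw [setIntegral_const, Set.inter_eq_self_of_subset_right ht's, Complex.real_smul,
            measureReal_def]
          ring
  rw [key t ht hts a, key r hr hrs b]

/-- Corollary 4.5. Let `C_φ` be a bounded `m`-isometric (`m ≥ 2`) composition
operator on `L²(μ)` over a directed graph with one circuit containing exactly one element
(`κ = 1`): here `X = {x₁} ∪ {x_{i,j} : 1 ≤ i ≤ η, j ∈ ℕ}` where `e i j` encodes `x_{i,j+1}`,
`φ(x₁) = x₁`, `φ(x_{i,1}) = x₁` and `φ(x_{i,j+1}) = x_{i,j}`. Then `C_φ` is not unitarily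
equivalent to any unilateral operator valued weighted shift. -/
theorem compositionOperator_oneCircuit_not_unitarily_equivalent_shift
    {X : Type*} [MeasurableSpace X] [MeasurableSingletonClass X] [Countable X]
    {ι : Type*} [Nonempty ι] [Countable ι]
    (x₁ : X) (e : ι → ℕ → X)
    (hinj : Function.Injective fun p : ι × ℕ => e p.1 p.2)
    (hx₁ : ∀ i j, e i j ≠ x₁)
    (hcover : ∀ x : X, x = x₁ ∨ ∃ i j, x = e i j)
    (φ : X → X)
    (hφ₁ : φ x₁ = x₁) (hφ₂ : ∀ i, φ (e i 0) = x₁) (hφ₃ : ∀ i j, φ (e i (j + 1)) = e i j)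
    (μ : Measure X) (hμ : ∀ x : X, 0 < μ {x} ∧ μ {x} < ⊤)
    (C : Lp ℂ 2 μ →L[ℂ] Lp ℂ 2 μ)
    (hC : ∀ f : Lp ℂ 2 μ, (C f : X → ℂ) =ᵐ[μ] fun x => f (φ x))
    (m : ℕ) (hm : 2 ≤ m) (hiso : IsMIsometry C m) :
    ∀ (K : Type*) [NormedAddCommGroup K] [InnerProductSpace ℂ K] [CompleteSpace K]
      (S : ℕ → K →L[ℂ] K)
      (Sh : lp (fun _ : ℕ => K) 2 →L[ℂ] lp (fun _ : ℕ => K) 2)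
      (U : Lp ℂ 2 μ ≃ₗᵢ[ℂ] lp (fun _ : ℕ => K) 2),
      (∃ M : ℝ, ∀ n, ‖S n‖ ≤ M) → (∀ n, IsUnit (S n)) →
      IsWeightedShiftOf Sh S →
      ¬ (∀ f : Lp ℂ 2 μ, U (C f) = Sh (U f)) := by
  intro K _ _ _ S Sh U _ hS hshift hU
  -- basic measure facts
  have hμ0 : ∀ x : X, μ {x} ≠ 0 := fun x => (hμ x).1.ne'
  have hμt : ∀ x : X, μ {x} ≠ ⊤ := fun x => (hμ x).2.ne
  have hempty : ∀ s : Set X, μ s = 0 → s = ∅ := by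
    intro s hs
    rw [Set.eq_empty_iff_forall_notMem]
    intro x hx
    exact hμ0 x (le_antisymm (hs ▸ measure_mono (Set.singleton_subset_iff.2 hx)) zero_le)
  have aeeq : ∀ {f g : X → ℂ}, f =ᵐ[μ] g → ∀ x, f x = g x := by
    intro f g h x
    by_contra hne
    have h0 : μ {y | ¬ f y = g y} = 0 := h
    have hx : x ∈ ({y | ¬ f y = g y} : Set X) := hne
    rw [hempty _ h0] at hx
    exact hx
  -- indicator elements
  set u : X → Lp ℂ 2 μ := fun x =>
    indicatorConstLp 2 (measurableSet_singleton x) (hμt x) (1 : ℂ) with hu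
  have u_coe : ∀ x y, (u x : X → ℂ) y = ({x} : Set X).indicator (fun _ => (1 : ℂ)) y :=
    fun x => aeeq indicatorConstLp_coeFn
  have C_coe : ∀ (f : Lp ℂ 2 μ) (x : X), (C f : X → ℂ) x = f (φ x) := fun f => aeeq (hC f)
  have Cpow_coe : ∀ (p : ℕ) (f : Lp ℂ 2 μ) (x : X), ((C ^ p) f : X → ℂ) x = f (φ^[p] x) := by
    intro p
    induction p with
    | zero => intro f x; simp
    | succ p ih =>
      intro f x
      rw [pow_succ, ContinuousLinearMap.mul_apply, ih (C f) x, C_coe f,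
        Function.iterate_succ_apply']
  -- iterates of φ
  have it1 : ∀ p, φ^[p] x₁ = x₁ := by
    intro p
    induction p with
    | zero => rfl
    | succ p ih => rw [Function.iterate_succ_apply', ih, hφ₁]
  have it2 : ∀ p j i, φ^[p] (e i (j + p)) = e i j := by
    intro p
    induction p with
    | zero => intro j i; rfl
    | succ p ih =>
      intro j i
      rw [show j + (p + 1) = (j + p) + 1 from rfl, Function.iterate_succ_apply, hφ₃ i (j + p),
        ih j i]
  have it3 : ∀ j i, φ^[j + 1] (e i j) = x₁ := by
    intro j
    induction j with
    | zero => intro i; rw [Function.iterate_one]; exact hφ₂ i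
    | succ j ih =>
      intro i
      rw [Function.iterate_succ_apply, hφ₃ i j]
      exact ih i
  have it4 : ∀ p j i, j < p → φ^[p] (e i j) = x₁ := by
    intro p j i h
    rw [show p = (p - (j + 1)) + (j + 1) by omega, Function.iterate_add_apply, it3 j i, it1]
  have epair : ∀ {i j i' j'}, e i j = e i' j' → i = i' ∧ j = j' := by
    intro i j i' j' h
    have := hinj (a₁ := (i, j)) (a₂ := (i', j')) h
    exact ⟨congrArg Prod.fst this, congrArg Prod.snd this⟩
  -- the sets F p and E p
  set F : ℕ → Set X := fun p => {x | φ^[p] x = x₁} with hF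
  have Fmeas : ∀ p, MeasurableSet (F p) := fun p => (Set.to_countable _).measurableSet
  have x1F : ∀ p, x₁ ∈ F p := fun p => it1 p
  have eF : ∀ p i j, e i j ∈ F p ↔ j < p := by
    intro p i j
    constructor
    · intro h
      by_contra hj
      have h2 := it2 p (j - p) i
      rw [show (j - p) + p = j by omega] at h2
      have : e i (j - p) = x₁ := by rw [← h2]; exact h
      exact hx₁ i (j - p) this
    · intro h; exact it4 p j i h
  have F0 : F 0 = {x₁} := by
    ext x
    simp only [hF, Set.mem_setOf_eq, Function.iterate_zero, id_eq, Set.mem_singleton_iff]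
  have Fsub : ∀ p, F p ⊆ F (p + 1) := by
    intro p x hx
    have : φ^[p] x = x₁ := hx
    show φ^[p + 1] x = x₁
    rw [Function.iterate_succ_apply', this, hφ₁]
  have fib2 : ∀ p i x, φ^[p] x = e i 0 ↔ x = e i p := by
    intro p i x
    constructor
    · intro h
      rcases hcover x with rfl | ⟨i', j, rfl⟩
      · rw [it1 p] at h; exact absurd h.symm (hx₁ i 0)
      · rcases lt_or_ge j p with hj | hj
        · rw [it4 p j i' hj] at h; exact absurd h.symm (hx₁ i 0)
        · have h2 := it2 p (j - p) i'
          rw [show (j - p) + p = j by omega] at h2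
          rw [h2] at h
          obtain ⟨rfl, hj0⟩ := epair h
          congr 1
          omega
    · rintro rfl
      simpa using it2 p 0 i
  set Ep : ℕ → Set X := fun p => ⋃ i, {e i p} with hEp'
  have Emeas : ∀ p, MeasurableSet (Ep p) := fun p => (Set.to_countable _).measurableSet
  have Fsucc : ∀ p, F (p + 1) = F p ∪ Ep p := by
    intro p
    ext x
    rcases hcover x with rfl | ⟨i, j, rfl⟩
    · simp [x1F p, x1F (p + 1)]
    · simp only [Set.mem_union, hEp', Set.mem_iUnion, Set.mem_singleton_iff]
      constructor
      · intro h
        have hj := (eF _ i j).1 h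
        rcases Nat.lt_succ_iff_lt_or_eq.1 hj with h' | rfl
        · exact Or.inl ((eF p i j).2 h')
        · exact Or.inr ⟨i, rfl⟩
      · rintro (h | ⟨i', hi'⟩)
        · exact Fsub p h
        · rw [hi']; exact (eF _ i' p).2 (Nat.lt_succ_self p)
  have Fdisj : ∀ p, Disjoint (F p) (Ep p) := by
    intro p
    rw [Set.disjoint_right]
    intro x hx hxF
    simp only [hEp', Set.mem_iUnion, Set.mem_singleton_iff] at hx
    obtain ⟨i, rfl⟩ := hx
    exact absurd ((eF p i p).1 hxF) (lt_irrefl p)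
  -- finiteness of the measures
  have Find : ∀ p, ((C ^ p) (u x₁) : X → ℂ) = (F p).indicator (fun _ => (1 : ℂ)) := by
    intro p
    funext x
    rw [Cpow_coe p (u x₁) x, u_coe x₁]
    by_cases hx : φ^[p] x = x₁ <;>
      simp [Set.indicator_apply, hx, hF, Set.mem_setOf_eq]
  have Ffin : ∀ p, μ (F p) ≠ ⊤ := by
    intro p
    have hme : MemLp ((F p).indicator (fun _ => (1 : ℂ))) 2 μ := by
      have h := Lp.memLp ((C ^ p) (u x₁))
      rwa [Find p] at h
    intro htop
    have h2 := hme.eLpNorm_lt_top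
    rw [eLpNorm_indicator_const (Fmeas p) two_ne_zero ENNReal.ofNat_ne_top, htop] at h2
    simp only [ENNReal.toReal_ofNat, nnnorm_one, enorm_one, ENNReal.coe_one, one_mul] at h2
    rw [ENNReal.top_rpow_of_pos (by norm_num)] at h2
    exact absurd h2 (lt_irrefl ⊤)
  have Efin : ∀ p, μ (Ep p) ≠ ⊤ := by
    intro p
    refine ne_top_of_le_ne_top (Ffin (p + 1)) (measure_mono ?_)
    rw [Fsucc p]
    exact Set.subset_union_right
  -- Lp equality for C^p (u x₁)
  have hCind : ∀ p : ℕ, (C ^ p) (u x₁) = indicatorConstLp 2 (Fmeas p) (Ffin p) (1 : ℂ) := by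
    intro p
    apply Lp.ext
    rw [Find p]
    exact indicatorConstLp_coeFn.symm
  -- inner products with indicators
  have inner_ind : ∀ (s : Set X) (hs : MeasurableSet s) (hfin : μ s ≠ ⊤) (f : Lp ℂ 2 μ),
      ⟪(indicatorConstLp 2 hs hfin (1 : ℂ) : Lp ℂ 2 μ), f⟫ = ∫ x in s, f x ∂μ := by
    intro s hs hfin f
    rw [L2.inner_indicatorConstLp_eq_setIntegral_inner]
    congr 1
    funext x
    simp [RCLike.inner_apply]
  -- pointwise formula for combinations
  have coe2 : ∀ (a b : ℂ) (g h : Lp ℂ 2 μ) (x : X),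
      ((a • g - b • h : Lp ℂ 2 μ) : X → ℂ) x = a * (g : X → ℂ) x - b * (h : X → ℂ) x := by
    intro a b g h
    apply aeeq
    filter_upwards [Lp.coeFn_sub (a • g) (b • h), Lp.coeFn_smul a g, Lp.coeFn_smul b h]
      with x h1 h2 h3
    rw [h1, Pi.sub_apply, h2, h3, Pi.smul_apply, Pi.smul_apply, smul_eq_mul, smul_eq_mul]
  -- the kernel elements
  set fi : ι → Lp ℂ 2 μ := fun i =>
    ((μ {e i 0}).toReal : ℂ) • u x₁ - ((μ {x₁}).toReal : ℂ) • u (e i 0) with hfi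
  have fi_coe : ∀ i y, (fi i : X → ℂ) y
      = ((μ {e i 0}).toReal : ℂ) * ({x₁} : Set X).indicator (fun _ => (1 : ℂ)) y
        - ((μ {x₁}).toReal : ℂ) * ({e i 0} : Set X).indicator (fun _ => (1 : ℂ)) y := by
    intro i y
    rw [hfi]
    rw [coe2, u_coe, u_coe]
  -- fi i is in the kernel of C*
  have hkerA : ∀ i g, ⟪fi i, C g⟫ = 0 := by
    intro i g
    rw [hfi]
    rw [inner_sub_left, inner_smul_left, inner_smul_left, hu]
    rw [inner_ind _ _ _ (C g), inner_ind _ _ _ (C g)]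
    rw [integral_singleton (fun x => (C g : X → ℂ) x) x₁,
      integral_singleton (fun x => (C g : X → ℂ) x) (e i 0)]
    rw [C_coe g x₁, C_coe g (e i 0), hφ₁, hφ₂ i]
    simp only [Complex.real_smul, Complex.conj_ofReal, measureReal_def]
    ring
  -- unitary equivalence of powers
  have hUpow : ∀ (p : ℕ) (f : Lp ℂ 2 μ), U ((C ^ p) f) = (Sh ^ p) (U f) := by
    intro p
    induction p with
    | zero => intro f; simp
    | succ p ih =>
      intro f
      rw [pow_succ, pow_succ, ContinuousLinearMap.mul_apply, ContinuousLinearMap.mul_apply,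
        ih (C f), hU f]
  -- kernel condition transferred from the shift
  have hKC : ∀ (f : Lp ℂ 2 μ), (∀ g, ⟪f, C g⟫ = 0) →
      ∀ (p : ℕ) (g : Lp ℂ 2 μ), ⟪(C ^ p) f, (C ^ (p + 1)) g⟫ = 0 := by
    intro f hf p g
    have hcomp : ∀ n : ℕ, (U f) (n + 1) = 0 := by
      intro n
      have hall : ∀ k : K, ⟪(U f) (n + 1), k⟫ = 0 := by
        intro k
        have hSk : S n ((((hS n).unit⁻¹ : (K →L[ℂ] K)ˣ) : K →L[ℂ] K) k) = k := by
          have h1 : ((hS n).unit : K →L[ℂ] K) ((((hS n).unit⁻¹ : (K →L[ℂ] K)ˣ) : K →L[ℂ] K) k)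
              = k := by
            rw [← ContinuousLinearMap.mul_apply, Units.mul_inv, ContinuousLinearMap.one_apply]
          rwa [(hS n).unit_spec] at h1
        set g' : Lp ℂ 2 μ :=
          U.symm (lp.single 2 n ((((hS n).unit⁻¹ : (K →L[ℂ] K)ˣ) : K →L[ℂ] K) k)) with hg'
        have h2 : lp.single 2 (n + 1) k = Sh (U g') := by
          rw [hg', U.apply_symm_apply, hshift n, hSk]
        calc ⟪(U f) (n + 1), k⟫ = ⟪U f, lp.single 2 (n + 1) k⟫ :=
              (lp.inner_single_right _ _ _).symm
          _ = ⟪U f, Sh (U g')⟫ := by rw [h2]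
          _ = ⟪U f, U (C g')⟫ := by rw [hU g']
          _ = ⟪f, C g'⟫ := U.inner_map_map f (C g')
          _ = 0 := hf g'
      have := hall ((U f) (n + 1))
      rwa [inner_self_eq_zero] at this
    have hval : U f = lp.single 2 0 ((U f) 0) := lp_eq_single_zero (U f) hcomp
    calc ⟪(C ^ p) f, (C ^ (p + 1)) g⟫ = ⟪U ((C ^ p) f), U ((C ^ (p + 1)) g)⟫ :=
          (U.inner_map_map _ _).symm
      _ = ⟪(Sh ^ p) (U f), (Sh ^ (p + 1)) (U g)⟫ := by rw [hUpow, hUpow]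
      _ = 0 := by
          rw [hval]
          obtain ⟨w, hw⟩ := shift_pow_single Sh S hshift p 0 ((U f) 0)
          rw [zero_add] at hw
          rw [hw]
          exact inner_single_shiftpow Sh S hshift p w (U g)
  -- pointwise formula for C^p (fi i)
  have hCfi : ∀ i (p : ℕ) (x : X), ((C ^ p) (fi i) : X → ℂ) x
      = ((μ {e i 0}).toReal : ℂ) * (F p).indicator (fun _ => (1 : ℂ)) x
        - ((μ {x₁}).toReal : ℂ) * ({e i p} : Set X).indicator (fun _ => (1 : ℂ)) x := by
    intro i p x
    rw [Cpow_coe p (fi i) x, fi_coe i]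
    have v1 : ({x₁} : Set X).indicator (fun _ => (1 : ℂ)) (φ^[p] x)
        = (F p).indicator (fun _ => (1 : ℂ)) x := by
      by_cases h : φ^[p] x = x₁
      · rw [Set.indicator_of_mem (Set.mem_singleton_iff.2 h),
          Set.indicator_of_mem (show x ∈ F p from h)]
      · rw [Set.indicator_of_notMem
            (show φ^[p] x ∉ ({x₁} : Set X) from fun hc => h (Set.mem_singleton_iff.1 hc)),
          Set.indicator_of_notMem (show x ∉ F p from fun hc => h hc)]
    have v2 : ({e i 0} : Set X).indicator (fun _ => (1 : ℂ)) (φ^[p] x)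
        = ({e i p} : Set X).indicator (fun _ => (1 : ℂ)) x := by
      by_cases h : x = e i p
      · rw [Set.indicator_of_mem (Set.mem_singleton_iff.2 ((fib2 p i x).2 h)),
          Set.indicator_of_mem (Set.mem_singleton_iff.2 h)]
      · rw [Set.indicator_of_notMem (show φ^[p] x ∉ ({e i 0} : Set X) from
            fun hc => h ((fib2 p i x).1 (Set.mem_singleton_iff.1 hc))),
          Set.indicator_of_notMem (show x ∉ ({e i p} : Set X) from
            fun hc => h (Set.mem_singleton_iff.1 hc))]
    rw [v1, v2]
  -- the key measure relation
  have hrel : ∀ i (p : ℕ),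
      (μ {e i 0}).toReal * (μ (F p)).toReal = (μ {x₁}).toReal * (μ {e i p}).toReal := by
    intro i p
    have h0 := hKC (fi i) (hkerA i) p (u x₁)
    have h1 : ⟪(C ^ (p + 1)) (u x₁), (C ^ p) (fi i)⟫ = 0 := by
      rw [← inner_conj_symm, h0, map_zero]
    rw [hCind (p + 1), inner_ind] at h1
    have h2 : (fun x => ((C ^ p) (fi i) : X → ℂ) x)
        = fun x => ((μ {e i 0}).toReal : ℂ) * (F p).indicator (fun _ => (1 : ℂ)) x
          - ((μ {x₁}).toReal : ℂ) * ({e i p} : Set X).indicator (fun _ => (1 : ℂ)) x :=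
      funext fun x => hCfi i p x
    rw [show (∫ x in F (p + 1), ((C ^ p) (fi i) : X → ℂ) x ∂μ)
        = ∫ x in F (p + 1), (((μ {e i 0}).toReal : ℂ) * (F p).indicator (fun _ => (1 : ℂ)) x
          - ((μ {x₁}).toReal : ℂ) * ({e i p} : Set X).indicator (fun _ => (1 : ℂ)) x) ∂μ by
        exact setIntegral_congr_fun (Fmeas (p + 1)) fun x _ => hCfi i p x] at h1
    rw [setIntegral_indicator_sub μ (Fmeas p) (measurableSet_singleton _) (Fsub p)
      (Set.singleton_subset_iff.2 ((eF (p + 1) i p).2 (Nat.lt_succ_self p))) (Ffin p)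
      (hμt (e i p))] at h1
    have h3 := sub_eq_zero.mp h1
    exact_mod_cast h3
  -- ENNReal versions
  have hrelENN : ∀ i (p : ℕ), μ {e i 0} * μ (F p) = μ {x₁} * μ {e i p} := by
    intro i p
    refine (ENNReal.toReal_eq_toReal_iff' (ENNReal.mul_ne_top (hμt _) (Ffin p))
      (ENNReal.mul_ne_top (hμt _) (hμt _))).mp ?_
    rw [ENNReal.toReal_mul, ENNReal.toReal_mul]
    exact hrel i p
  have hEpm : ∀ p : ℕ, μ (Ep p) = ∑' i, μ {e i p} := by
    intro p
    refine measure_iUnion ?_ fun i => measurableSet_singleton _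
    intro i j hij
    simp only [Function.onFun, Set.disjoint_singleton]
    exact fun h => hij (epair h).1
  have hEF : ∀ p : ℕ, μ {x₁} * μ (Ep p) = μ (Ep 0) * μ (F p) := by
    intro p
    calc μ {x₁} * μ (Ep p) = ∑' i, μ {x₁} * μ {e i p} := by
          rw [hEpm p, ENNReal.tsum_mul_left]
      _ = ∑' i, μ {e i 0} * μ (F p) := tsum_congr fun i => (hrelENN i p).symm
      _ = μ (Ep 0) * μ (F p) := by rw [ENNReal.tsum_mul_right, hEpm 0]
  have hFrec : ∀ p : ℕ, μ {x₁} * μ (F (p + 1)) = (μ {x₁} + μ (Ep 0)) * μ (F p) := by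
    intro p
    rw [Fsucc p, measure_union (Fdisj p) (Emeas p), mul_add, hEF p, add_mul]
  have hFpow : ∀ p : ℕ, μ {x₁} ^ p * μ (F p) = (μ {x₁} + μ (Ep 0)) ^ p * μ {x₁} := by
    intro p
    induction p with
    | zero => simp [F0]
    | succ p ih =>
      calc μ {x₁} ^ (p + 1) * μ (F (p + 1))
          = μ {x₁} ^ p * (μ {x₁} * μ (F (p + 1))) := by ring
        _ = μ {x₁} ^ p * ((μ {x₁} + μ (Ep 0)) * μ (F p)) := by rw [hFrec p]
        _ = (μ {x₁} + μ (Ep 0)) * (μ {x₁} ^ p * μ (F p)) := by ring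
        _ = (μ {x₁} + μ (Ep 0)) * ((μ {x₁} + μ (Ep 0)) ^ p * μ {x₁}) := by rw [ih]
        _ = (μ {x₁} + μ (Ep 0)) ^ (p + 1) * μ {x₁} := by ring
  -- pass to the reals
  set a : ℝ := (μ {x₁}).toReal with ha010
  set q : ℝ := (μ {x₁} + μ (Ep 0)).toReal with hq010
  have ha : 0 < a := ENNReal.toReal_pos (hμ0 x₁) (hμt x₁)
  have hE0pos : μ (Ep 0) ≠ 0 := by
    intro h0
    have i₀ : ι := Classical.arbitrary ι
    have hle : μ {e i₀ 0} ≤ μ (Ep 0) :=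
      measure_mono (Set.singleton_subset_iff.2 (Set.mem_iUnion.2 ⟨i₀, rfl⟩))
    rw [h0] at hle
    exact hμ0 (e i₀ 0) (le_antisymm hle zero_le)
  have hqa : a < q := by
    rw [hq010, ENNReal.toReal_add (hμt x₁) (Efin 0)]
    have : 0 < (μ (Ep 0)).toReal := ENNReal.toReal_pos hE0pos (Efin 0)
    linarith
  have hq2 : ∀ p : ℕ, a ^ p * (μ (F p)).toReal = q ^ p * a := by
    intro p
    have h := congrArg ENNReal.toReal (hFpow p)
    rwa [ENNReal.toReal_mul, ENNReal.toReal_mul, ENNReal.toReal_pow, ENNReal.toReal_pow] at h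
  set r : ℝ := q / a with hr010
  have hσ : ∀ p : ℕ, (μ (F p)).toReal = a * r ^ p := by
    intro p
    have h := hq2 p
    have hap : a ^ p ≠ 0 := pow_ne_zero _ (ne_of_gt ha)
    rw [hr010, div_pow, mul_div_assoc', eq_div_iff hap]
    linear_combination h
  -- the m-isometry identity applied to u x₁
  have hterm : ∀ p : ℕ, ⟪u x₁, opBr C p (u x₁)⟫ = (((μ (F p)).toReal : ℝ) : ℂ) := by
    intro p
    have hadj : (ContinuousLinearMap.adjoint C) ^ p = ContinuousLinearMap.adjoint (C ^ p) := by
      rw [← ContinuousLinearMap.star_eq_adjoint, ← ContinuousLinearMap.star_eq_adjoint,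
        ← star_pow]
    show ⟪u x₁, ((ContinuousLinearMap.adjoint C ^ p).comp (C ^ p)) (u x₁)⟫ = _
    rw [ContinuousLinearMap.comp_apply, hadj, ContinuousLinearMap.adjoint_inner_right]
    rw [hCind p, inner_ind]
    rw [setIntegral_congr_fun (Fmeas p)
      (fun x _ => aeeq (indicatorConstLp_coeFn (p := 2) (μ := μ)) x)]
    rw [setIntegral_indicator (Fmeas p), Set.inter_self, setIntegral_const]
    simp [Complex.real_smul]
    rfl
  have hiso2 : ∑ p ∈ Finset.range (m + 1),
      ((-1 : ℂ) ^ p * (m.choose p : ℂ)) * (((μ (F p)).toReal : ℝ) : ℂ) = 0 := by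
    have h0 := congrArg (fun T : Lp ℂ 2 μ →L[ℂ] Lp ℂ 2 μ => ⟪u x₁, T (u x₁)⟫) hiso
    simp only [ContinuousLinearMap.sum_apply, ContinuousLinearMap.smul_apply, inner_sum,
      inner_smul_right, ContinuousLinearMap.zero_apply, inner_zero_right] at h0
    simp only [hterm] at h0
    convert h0 using 2
  -- finish
  have hσC : ∀ p : ℕ, (((μ (F p)).toReal : ℝ) : ℂ) = (a : ℂ) * (r : ℂ) ^ p := by
    intro p
    rw [hσ p]
    push_cast
    ring
  have hfin : (a : ℂ) * ((1 : ℂ) - (r : ℂ)) ^ m = 0 := by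
    rw [← binom_sum m (r : ℂ), Finset.mul_sum, ← hiso2]
    refine Finset.sum_congr rfl fun p _ => ?_
    rw [hσC p]
    ring
  have h1 : (a : ℂ) ≠ 0 := Complex.ofReal_ne_zero.2 (ne_of_gt ha)
  have hr1 : 1 < r := by
    rw [hr010]
    exact (one_lt_div ha).2 hqa
  have h2 : (1 : ℂ) - (r : ℂ) ≠ 0 := by
    have hne : (1 - r : ℝ) ≠ 0 := by linarith
    have := Complex.ofReal_ne_zero.2 hne
    simpa [Complex.ofReal_sub] using this
  exact absurd hfin (mul_ne_zero h1 (pow_ne_zero m h2))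
end
end
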